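/- A unital affine K-algebra R is a binomial algebra (i.e., isomorphic to a quotient of some quantum affine space by a binomial ideal) if and only if R admits a grading by a commutative monoid S such that (1) every nonzero homogeneous component R_s is 1-dimensional over K, and (2) for all s,t ∈ S, R_s R_t = 0 if and only if R_t R_s = 0. -/

import Mathlib

/-- A quantum affine space `O_q(Kⁿ)`: an algebra `A` with basis
`(x^α)_{α ∈ ℕⁿ}` and multiplication `x^α x^β = d(α,β) x^{α+β}` where
`d(α,β) = ∏_{i>j} q_{ij}^{α_i β_j}` for a multiplicatively skew-symmetric
matrix `q`. -/
structure QuantumAffine (K : Type) [Field K] (n : ℕ) (A : Type) [Ring A] [Algebra K A] where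
  q : Fin n → Fin n → Kˣ
  q_diag : ∀ i, q i i = 1
  q_skew : ∀ i j, q j i = (q i j)⁻¹
  d : (Fin n → ℕ) → (Fin n → ℕ) → Kˣ
  d_eq : ∀ α β, d α β = ∏ i : Fin n, ∏ j : Fin n,
      if (j : ℕ) < (i : ℕ) then q i j ^ (α i * β j) else 1
  x : (Fin n → ℕ) → A
  basis : Module.Basis (Fin n → ℕ) K A
  basis_eq : ∀ α, basis α = x α
  x_mul : ∀ α β, x α * x β = ((d α β : K)) • x (α + β)
  x_zero : x 0 = 1

namespace QuantumAffine

variable {K : Type} [Field K] {n : ℕ} {A : Type} [Ring A] [Algebra K A]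

/-- A binomial ideal of a quantum affine space: a two-sided ideal generated by
nonzero elements `λ x^α + μ x^β` with `α, β ∈ ℕⁿ`. -/
def IsBinomialIdeal (Q : QuantumAffine K n A) (B : TwoSidedIdeal A) : Prop :=
  ∃ S : Set A,
    (∀ b ∈ S, b ≠ 0 ∧ ∃ (l m : K) (α β : Fin n → ℕ), b = l • Q.x α + m • Q.x β) ∧
    B = TwoSidedIdeal.span S

/-- The relation `α ∼ β ⟺ K·(x^α + B) = K·(x^β + B)` on `ℕⁿ`. -/
def rel (Q : QuantumAffine K n A) (B : TwoSidedIdeal A) (α β : Fin n → ℕ) : Prop :=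
  (Q.x α ∈ B ∧ Q.x β ∈ B) ∨ ∃ lam : Kˣ, Q.x α - ((lam : K)) • Q.x β ∈ B

end QuantumAffine

noncomputable section Twisted
variable {K : Type} [Field K] {m : ℕ}

/-- The cocycle `d(α,β) = ∏_{i>j} q_{ij}^{α_i β_j}`. -/
def dd (q : Fin m → Fin m → Kˣ) (α β : Fin m → ℕ) : Kˣ :=
  ∏ i : Fin m, ∏ j : Fin m, if (j : ℕ) < (i : ℕ) then q i j ^ (α i * β j) else 1

lemma dd_add_left (q : Fin m → Fin m → Kˣ) (α α' β : Fin m → ℕ) :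
    dd q (α + α') β = dd q α β * dd q α' β := by
  unfold dd
  rw [← Finset.prod_mul_distrib]
  refine Finset.prod_congr rfl fun i _ => ?_
  rw [← Finset.prod_mul_distrib]
  refine Finset.prod_congr rfl fun j _ => ?_
  split_ifs with h
  · rw [Pi.add_apply, add_mul, pow_add]
  · rw [mul_one]

lemma dd_add_right (q : Fin m → Fin m → Kˣ) (α β β' : Fin m → ℕ) :
    dd q α (β + β') = dd q α β * dd q α β' := by
  unfold dd
  rw [← Finset.prod_mul_distrib]
  refine Finset.prod_congr rfl fun i _ => ?_
  rw [← Finset.prod_mul_distrib]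
  refine Finset.prod_congr rfl fun j _ => ?_
  split_ifs with h
  · rw [Pi.add_apply, mul_add, pow_add]
  · rw [mul_one]

lemma dd_zero_left (q : Fin m → Fin m → Kˣ) (β : Fin m → ℕ) : dd q 0 β = 1 := by
  unfold dd
  refine Finset.prod_eq_one fun i _ => Finset.prod_eq_one fun j _ => ?_
  split_ifs with h
  · simp
  · rfl

lemma dd_zero_right (q : Fin m → Fin m → Kˣ) (α : Fin m → ℕ) : dd q α 0 = 1 := by
  unfold dd
  refine Finset.prod_eq_one fun i _ => Finset.prod_eq_one fun j _ => ?_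
  split_ifs with h
  · simp
  · rfl

/-- The twisted monoid algebra carrier. -/
@[reducible] def TA (K : Type) [Field K] (m : ℕ) (_q : Fin m → Fin m → Kˣ) : Type := (Fin m → ℕ) →₀ K

namespace TA



variable (q : Fin m → Fin m → Kˣ)

instance : AddCommGroup (TA K m q) := inferInstanceAs (AddCommGroup ((Fin m → ℕ) →₀ K))
instance : Module K (TA K m q) := inferInstanceAs (Module K ((Fin m → ℕ) →₀ K))

/-- basis vector -/
def sing (α : Fin m → ℕ) (c : K) : TA K m q := Finsupp.single α c

instance : Mul (TA K m q) :=
  ⟨fun f g => Finsupp.sum f fun α a => Finsupp.sum g fun β b =>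
    Finsupp.single (α + β) ((dd q α β : K) * (a * b))⟩

lemma mul_def (f g : TA K m q) : f * g = Finsupp.sum f fun α a => Finsupp.sum g fun β b =>
    Finsupp.single (α + β) ((dd q α β : K) * (a * b)) := rfl

lemma single_mul_single (α β : Fin m → ℕ) (a b : K) :
    (sing q α a) * (sing q β b) = sing q (α + β) ((dd q α β : K) * (a * b)) := by
  show (Finsupp.sum (Finsupp.single α a) fun α' a' => Finsupp.sum (Finsupp.single β b)
      fun β' b' => Finsupp.single (α' + β') ((dd q α' β' : K) * (a' * b'))) = _
  rw [Finsupp.sum_single_index, Finsupp.sum_single_index]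
  · rfl
  · simp
  · rw [Finsupp.sum_single_index] <;> simp

lemma zero_mul' (f : TA K m q) : (0 : TA K m q) * f = 0 := by
  rw [mul_def]; exact Finsupp.sum_zero_index

lemma mul_zero' (f : TA K m q) : f * (0 : TA K m q) = 0 := by
  rw [mul_def]
  refine Finset.sum_eq_zero fun α _ => Finsupp.sum_zero_index

lemma add_mul' (f g h : TA K m q) : (f + g) * h = f * h + g * h := by
  rw [mul_def, mul_def, mul_def]
  refine Finsupp.sum_add_index' (fun α => ?_) (fun α a a' => ?_)
  · refine Finset.sum_eq_zero fun β _ => by simp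
  · rw [← Finsupp.sum_add]
    refine Finsupp.sum_congr fun β _ => ?_
    rw [← Finsupp.single_add]
    congr 1
    ring

lemma mul_add' (f g h : TA K m q) : f * (g + h) = f * g + f * h := by
  rw [mul_def, mul_def, mul_def, ← Finsupp.sum_add]
  refine Finsupp.sum_congr fun α a => ?_
  refine Finsupp.sum_add_index' (fun β => by simp) (fun β b b' => ?_)
  rw [← Finsupp.single_add]
  congr 1
  ring

lemma mul_assoc' (f g h : TA K m q) : f * g * h = f * (g * h) := by
  induction f using Finsupp.induction_linear with
  | zero => simp only [zero_mul']
  | add f f' hf hf' => rw [add_mul', add_mul', add_mul', hf, hf']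
  | single α a =>
    induction g using Finsupp.induction_linear with
    | zero => simp only [zero_mul', mul_zero']
    | add g g' hg hg' => rw [mul_add', add_mul', add_mul', mul_add', hg, hg']
    | single β b =>
      induction h using Finsupp.induction_linear with
      | zero => simp only [mul_zero']
      | add h h' hh hh' => rw [mul_add', mul_add', mul_add', hh, hh']
      | single γ c =>
        show sing q α a * sing q β b * sing q γ c = sing q α a * (sing q β b * sing q γ c)
        rw [single_mul_single, single_mul_single, single_mul_single, single_mul_single,
          add_assoc]
        congr 1
        rw [dd_add_left, dd_add_right]
        push_cast
        ring

instance : One (TA K m q) := ⟨sing q 0 1⟩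

lemma one_def : (1 : TA K m q) = sing q 0 1 := rfl

lemma one_mul' (f : TA K m q) : 1 * f = f := by
  induction f using Finsupp.induction_linear with
  | zero => rw [mul_zero']
  | add f f' hf hf' => rw [mul_add', hf, hf']
  | single α a =>
    show (1 : TA K m q) * sing q α a = sing q α a
    rw [one_def, single_mul_single, zero_add, dd_zero_left]
    simp [sing]

lemma mul_one' (f : TA K m q) : f * 1 = f := by
  induction f using Finsupp.induction_linear with
  | zero => rw [zero_mul']
  | add f f' hf hf' => rw [add_mul', hf, hf']
  | single α a =>
    show sing q α a * (1 : TA K m q) = sing q α a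
    rw [one_def, single_mul_single, add_zero, dd_zero_right]
    simp [sing]

instance instRing : Ring (TA K m q) :=
  { (inferInstance : AddCommGroup (TA K m q)) with
    mul := (· * ·)
    one := 1
    left_distrib := mul_add' q
    right_distrib := add_mul' q
    zero_mul := zero_mul' q
    mul_zero := mul_zero' q
    mul_assoc := mul_assoc' q
    one_mul := one_mul' q
    mul_one := mul_one' q }

lemma smul_mul' (r : K) (f g : TA K m q) : (r • f) * g = r • (f * g) := by
  rw [mul_def, mul_def]
  rw [Finsupp.sum_smul_index (fun α => Finset.sum_eq_zero fun β _ => by simp)]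
  rw [Finsupp.smul_sum]
  refine Finsupp.sum_congr fun α a => ?_
  rw [Finsupp.smul_sum]
  refine Finsupp.sum_congr fun β b => ?_
  rw [Finsupp.smul_single]
  congr 1
  simp only [smul_eq_mul]
  ring

lemma mul_smul'' (r : K) (f g : TA K m q) : f * (r • g) = r • (f * g) := by
  rw [mul_def, mul_def, Finsupp.smul_sum]
  refine Finsupp.sum_congr fun α a => ?_
  rw [Finsupp.sum_smul_index (fun β => by simp), Finsupp.smul_sum]
  refine Finsupp.sum_congr fun β b => ?_
  rw [Finsupp.smul_single]
  congr 1
  simp only [smul_eq_mul]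
  ring

instance instAlgebra : Algebra K (TA K m q) :=
  Algebra.ofModule (smul_mul' q) (mul_smul'' q)

/-- the basis -/
def bas : Module.Basis (Fin m → ℕ) K (TA K m q) := Finsupp.basisSingleOne

lemma bas_eq (α : Fin m → ℕ) : bas q α = sing q α 1 := by
  apply (bas q).repr.injective
  rw [Module.Basis.repr_self]
  show (Finsupp.basisSingleOne (ι := Fin m → ℕ) (R := K)).repr (Finsupp.single α 1) = _
  rw [Finsupp.basisSingleOne_repr]
  rfl

def quantumAffine (hdiag : ∀ i, q i i = 1) (hskew : ∀ i j, q j i = (q i j)⁻¹) :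
    QuantumAffine K m (TA K m q) where
  q := q
  q_diag := hdiag
  q_skew := hskew
  d := dd q
  d_eq := fun _ _ => rfl
  x := fun α => sing q α 1
  basis := bas q
  basis_eq := bas_eq q
  x_mul := fun α β => by
    rw [single_mul_single, mul_one]
    show Finsupp.single (α + β) ((dd q α β : K) * 1) =
      (dd q α β : K) • Finsupp.single (α + β) (1 : K)
    rw [Finsupp.smul_single, smul_eq_mul, mul_one]
  x_zero := rfl

end TA
end Twisted

namespace TA
/-- Induction principle for `TA` stated with `TA`'s own operations. -/
lemma ind {K : Type} [Field K] {m : ℕ} {q : Fin m → Fin m → Kˣ} {p : TA K m q → Prop}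
    (f : TA K m q) (h0 : p 0) (hadd : ∀ f g : TA K m q, p f → p g → p (f + g))
    (hs : ∀ α a, p (sing q α a)) : p f :=
  Finsupp.induction_linear (motive := p) f h0 hadd hs
end TA

lemma dd_coe {K : Type} [Field K] {m : ℕ} (q : Fin m → Fin m → Kˣ) (α β : Fin m → ℕ) :
    ((dd q α β : Kˣ) : K) = ∏ i : Fin m, ∏ j : Fin m,
      (if (j : ℕ) < (i : ℕ) then ((q i j : K)) ^ (α i * β j) else 1) := by
  unfold dd
  rw [← Units.coeHom_apply, map_prod]
  refine Finset.prod_congr rfl fun i _ => ?_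
  rw [map_prod]
  refine Finset.prod_congr rfl fun j _ => ?_
  rw [Units.coeHom_apply]
  split_ifs with h
  · rw [Units.val_pow_eq_pow_val]
  · rfl

noncomputable section Backward

variable {K : Type} [Field K] {m : ℕ} {R : Type} [Ring R] [Algebra K R]

/-- Ordered monomial: partial products `y 0 ^ α 0 * ⋯ * y (n-1) ^ α (n-1)`. -/
def Gm (m : ℕ) (y : Fin m → R) : ℕ → (Fin m → ℕ) → R
  | 0, _ => 1
  | n+1, α => Gm m y n α * (if h : n < m then y ⟨n, h⟩ ^ α ⟨n, h⟩ else 1)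

section Glemmas

variable (q : Fin m → Fin m → Kˣ) (y : Fin m → R)
variable (hq : ∀ i j, y i * y j = ((q i j : K)) • (y j * y i))

lemma filter_succ_eq_insert {n : ℕ} (h : n < m) :
    Finset.univ.filter (fun j : Fin m => (j : ℕ) < n + 1) =
      insert ⟨n, h⟩ (Finset.univ.filter (fun j : Fin m => (j : ℕ) < n)) := by
  ext j
  simp only [Finset.mem_filter, Finset.mem_insert, Finset.mem_univ, true_and]
  constructor
  · intro hj
    rcases Nat.lt_succ_iff_lt_or_eq.mp hj with h' | h'
    · exact Or.inr h'
    · exact Or.inl (Fin.ext h')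
  · rintro (rfl | h')
    · exact Nat.lt_succ_self n
    · exact Nat.lt_succ_of_lt h'

lemma mk_not_mem_filter {n : ℕ} (h : n < m) :
    (⟨n, h⟩ : Fin m) ∉ Finset.univ.filter (fun j : Fin m => (j : ℕ) < n) := by simp

lemma filter_succ_eq_self {n : ℕ} (h : ¬ n < m) :
    Finset.univ.filter (fun j : Fin m => (j : ℕ) < n + 1) =
      Finset.univ.filter (fun j : Fin m => (j : ℕ) < n) := by
  ext j
  have hj : (j : ℕ) < m := j.isLt
  have h1 : (j : ℕ) < n := lt_of_lt_of_le hj (Nat.le_of_not_lt h)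
  simp [h1, Nat.lt_succ_of_lt h1, h1.le]

include hq in
lemma pow_comm' (i j : Fin m) (a b : ℕ) :
    y i ^ a * y j ^ b = (((q i j : K)) ^ (a * b)) • (y j ^ b * y i ^ a) := by
  have step : ∀ c : ℕ, y i * y j ^ c = (((q i j : K)) ^ c) • (y j ^ c * y i) := by
    intro c
    induction c with
    | zero => simp
    | succ c ihc =>
      rw [pow_succ, ← mul_assoc, ihc, smul_mul_assoc, mul_assoc, hq i j,
        mul_smul_comm, smul_smul, pow_succ, ← mul_assoc]
  induction a with
  | zero => simp
  | succ a ih =>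
    have e1 : y i ^ (a + 1) * y j ^ b = y i ^ a * (y i * y j ^ b) := by
      rw [pow_succ, mul_assoc]
    rw [e1, step b, mul_smul_comm, ← mul_assoc, ih, smul_mul_assoc, smul_smul, ← pow_add,
      mul_assoc, ← pow_succ]
    have he : b + a * b = (a + 1) * b := by ring
    rw [he]

include hq in
lemma pow_Gm_comm (α : Fin m → ℕ) (i : Fin m) (b : ℕ) : ∀ n : ℕ,
    y i ^ b * Gm m y n α =
      (∏ j ∈ Finset.univ.filter (fun j : Fin m => (j : ℕ) < n), ((q i j : K)) ^ (b * α j)) •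
        (Gm m y n α * y i ^ b) := by
  intro n
  induction n with
  | zero => simp [Gm]
  | succ n ih =>
    simp only [Gm]
    by_cases h : n < m
    · rw [dif_pos h, ← mul_assoc, ih, smul_mul_assoc, mul_assoc,
        pow_comm' q y hq i ⟨n, h⟩ b (α ⟨n, h⟩), mul_smul_comm, smul_smul,
        filter_succ_eq_insert h, Finset.prod_insert (mk_not_mem_filter h), mul_assoc]
      congr 1
      ring
    · rw [dif_neg h, mul_one, ih, filter_succ_eq_self h]

include hq in
lemma Gm_mul_Gm (α β : Fin m → ℕ) : ∀ n : ℕ,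
    Gm m y n α * Gm m y n β =
      (∏ i ∈ Finset.univ.filter (fun i : Fin m => (i : ℕ) < n), ∏ j : Fin m,
        (if (j : ℕ) < (i : ℕ) then ((q i j : K)) ^ (α i * β j) else 1)) •
        Gm m y n (α + β) := by
  intro n
  induction n with
  | zero => simp [Gm]
  | succ n ih =>
    simp only [Gm]
    by_cases h : n < m
    · simp only [dif_pos h]
      rw [filter_succ_eq_insert h, Finset.prod_insert (mk_not_mem_filter h)]
      have hab : (α + β) ⟨n, h⟩ = α ⟨n, h⟩ + β ⟨n, h⟩ := rfl
      have swap := pow_Gm_comm q y hq β ⟨n, h⟩ (α ⟨n, h⟩) n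
      rw [hab, pow_add, mul_assoc, ← mul_assoc (y ⟨n, h⟩ ^ α ⟨n, h⟩), swap,
        smul_mul_assoc, mul_smul_comm, mul_assoc (Gm m y n β), ← mul_assoc (Gm m y n α),
        ih, smul_mul_assoc, smul_smul, ← mul_assoc (Gm m y n (α + β))]
      congr 1
      have hcond : ∀ j : Fin m, ((j : ℕ) < ((⟨n, h⟩ : Fin m) : ℕ)) = ((j : ℕ) < n) :=
        fun _ => rfl
      have hprod : (∏ j : Fin m,
          (if (j : ℕ) < ((⟨n, h⟩ : Fin m) : ℕ) then
            ((q ⟨n, h⟩ j : K)) ^ (α ⟨n, h⟩ * β j) else 1)) =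
          ∏ j ∈ Finset.univ.filter (fun j : Fin m => (j : ℕ) < n),
            ((q ⟨n, h⟩ j : K)) ^ (α ⟨n, h⟩ * β j) := by
        rw [Finset.prod_filter]
      rw [hprod]
    · simp only [dif_neg h]
      rw [mul_one, mul_one, mul_one, ih, filter_succ_eq_self h]

lemma Gm_zero : ∀ n : ℕ, Gm m y n (0 : Fin m → ℕ) = 1 := by
  intro n
  induction n with
  | zero => rfl
  | succ n ih =>
    simp only [Gm]
    rw [ih, one_mul]
    split_ifs with h
    · show y ⟨n, h⟩ ^ (0 : ℕ) = 1
      rw [pow_zero]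
    · rfl

lemma Gm_single (i : Fin m) : ∀ n : ℕ,
    Gm m y n (Pi.single i 1) = if (i : ℕ) < n then y i else 1 := by
  intro n
  induction n with
  | zero => simp [Gm]
  | succ n ih =>
    simp only [Gm]
    rw [ih]
    by_cases h : n < m
    · rw [dif_pos h]
      by_cases hi : i = ⟨n, h⟩
      · have hv : (i : ℕ) = n := by rw [hi]
        rw [← hi, Pi.single_eq_same, pow_one, if_neg (by omega), one_mul,
          if_pos (by omega)]
      · have hne : (⟨n, h⟩ : Fin m) ≠ i := fun e => hi e.symm
        have hv : (i : ℕ) ≠ n := fun e => hi (Fin.ext e)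
        rw [Pi.single_eq_of_ne hne, pow_zero, mul_one]
        by_cases hc : (i : ℕ) < n
        · rw [if_pos hc, if_pos (by omega)]
        · rw [if_neg hc, if_neg (by omega)]
    · rw [dif_neg h, mul_one]
      have hi : (i : ℕ) < m := i.isLt
      have h1 : (i : ℕ) < n := lt_of_lt_of_le hi (Nat.le_of_not_lt h)
      rw [if_pos h1, if_pos (Nat.lt_succ_of_lt h1)]

variable {S : Type} [AddCommMonoid S] (w : S → Submodule K R) (σ : Fin m → S)

lemma pow_mem_w (hone : (1 : R) ∈ w 0)
    (hmul : ∀ s t : S, ∀ a ∈ w s, ∀ b ∈ w t, a * b ∈ w (s + t))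
    (i : Fin m) (hy : y i ∈ w (σ i)) (k : ℕ) : y i ^ k ∈ w (k • σ i) := by
  induction k with
  | zero => simpa using hone
  | succ k ih =>
    have h2 := hmul _ _ _ ih _ hy
    rw [pow_succ]
    rwa [succ_nsmul]

lemma Gm_mem_w (hone : (1 : R) ∈ w 0)
    (hmul : ∀ s t : S, ∀ a ∈ w s, ∀ b ∈ w t, a * b ∈ w (s + t))
    (hy : ∀ i, y i ∈ w (σ i)) (α : Fin m → ℕ) : ∀ n : ℕ,
    Gm m y n α ∈ w (∑ i ∈ Finset.univ.filter (fun i : Fin m => (i : ℕ) < n), α i • σ i) := by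
  intro n
  induction n with
  | zero => simpa [Gm] using hone
  | succ n ih =>
    simp only [Gm]
    by_cases h : n < m
    · rw [dif_pos h, filter_succ_eq_insert h, Finset.sum_insert (mk_not_mem_filter h)]
      have hp := pow_mem_w y w σ hone hmul ⟨n, h⟩ (hy _) (α ⟨n, h⟩)
      have h2 := hmul _ _ _ ih _ hp
      rwa [add_comm] at h2
    · rw [dif_neg h, mul_one, filter_succ_eq_self h]
      exact ih

end Glemmas
end Backward

theorem backward_dir {K : Type} [Field K] (R : Type) [Ring R] [Algebra K R]
    [Algebra.FiniteType K R]
    (S : Type) (instS : AddCommMonoid S) (w : S → Submodule K R)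
    (hindep : iSupIndep w) (hsup : (⨆ s, w s) = ⊤) (hone : (1 : R) ∈ w 0)
    (hmul : ∀ s t : S, ∀ a ∈ w s, ∀ b ∈ w t, a * b ∈ w (s + t))
    (hdim : ∀ s : S, w s ≠ ⊥ → ∃ r : R, r ≠ 0 ∧ w s = Submodule.span K {r})
    (hzz : ∀ s t : S, (∀ a ∈ w s, ∀ b ∈ w t, a * b = 0) ↔
      (∀ a ∈ w s, ∀ b ∈ w t, b * a = 0)) :
    ∃ (m : ℕ) (A : Type) (_ : Ring A) (_ : Algebra K A) (Q : QuantumAffine K m A)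
      (B : TwoSidedIdeal A), Q.IsBinomialIdeal B ∧
      ∃ ψ : A →ₐ[K] R, Function.Surjective ψ ∧ ∀ a : A, ψ a = 0 ↔ a ∈ B := by
  classical
  -- one-dimensionality helper
  have hspan : ∀ (s : S) (u v : R), u ∈ w s → v ∈ w s → u ≠ 0 → ∃ c : K, v = c • u := by
    intro s u v hu hv hu0
    have hbot : w s ≠ ⊥ := by
      intro hb
      rw [hb, Submodule.mem_bot] at hu
      exact hu0 hu
    obtain ⟨r, hr0, hrs⟩ := hdim s hbot
    rw [hrs] at hu hv
    obtain ⟨a, ha⟩ := Submodule.mem_span_singleton.mp hu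
    obtain ⟨b, hb⟩ := Submodule.mem_span_singleton.mp hv
    have ha0 : a ≠ 0 := by
      rintro rfl
      rw [zero_smul] at ha
      exact hu0 ha.symm
    refine ⟨b / a, ?_⟩
    rw [← ha, ← hb, smul_smul, div_mul_cancel₀ _ ha0]
  -- homogeneous generators
  obtain ⟨G, hG⟩ := (inferInstance : Algebra.FiniteType K R).out
  have hdecomp : ∀ g : R, ∃ f : S →₀ R, (∀ s, f s ∈ w s) ∧ (f.sum fun _ x => x) = g := by
    intro g
    have hg : g ∈ ⨆ s, w s := by rw [hsup]; trivial
    exact (Submodule.mem_iSup_iff_exists_finsupp w g).mp hg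
  choose F hF1 hF2 using hdecomp
  set H : Finset (S × R) := G.biUnion (fun g => (F g).support.image fun s => (s, F g s)) with hH
  set m := H.card with hm
  set e := H.equivFin with he
  set σ : Fin m → S := fun i => (e.symm i).1.1 with hσ
  set y : Fin m → R := fun i => (e.symm i).1.2 with hy
  have hyw : ∀ i, y i ∈ w (σ i) := by
    intro i
    have hmem : ((e.symm i : {x // x ∈ H}) : S × R) ∈
        G.biUnion (fun g => (F g).support.image fun s => (s, F g s)) := (e.symm i).2
    rw [Finset.mem_biUnion] at hmem
    obtain ⟨g, hg, hmem⟩ := hmem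
    rw [Finset.mem_image] at hmem
    obtain ⟨s, hs, hpair⟩ := hmem
    have h1 : σ i = s := by
      show ((e.symm i : { x // x ∈ H }) : S × R).1 = s
      rw [← hpair]
    have h2 : y i = F g s := by
      show ((e.symm i : { x // x ∈ H }) : S × R).2 = F g s
      rw [← hpair]
    rw [h1, h2]
    exact hF1 g s
  have hgen : Algebra.adjoin K (Set.range y) = ⊤ := by
    apply le_antisymm le_top
    rw [← hG]
    apply Algebra.adjoin_le
    intro g hg
    rw [← hF2 g]
    apply Subalgebra.sum_mem
    intro s hs
    have h_in : (s, F g s) ∈ H := by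
      rw [hH, Finset.mem_biUnion]
      exact ⟨g, hg, Finset.mem_image_of_mem _ hs⟩
    have hval : y (e ⟨(s, F g s), h_in⟩) = F g s := by
      show ((e.symm (e ⟨(s, F g s), h_in⟩) : {x // x ∈ H}) : S × R).2 = F g s
      rw [Equiv.symm_apply_apply]
    exact Algebra.subset_adjoin ⟨e ⟨(s, F g s), h_in⟩, hval⟩
  -- zero products are symmetric
  have hy0 : ∀ i j, y i * y j = 0 → y j * y i = 0 := by
    intro i j hij
    by_cases h1 : y i = 0
    · rw [h1, mul_zero]
    by_cases h2 : y j = 0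
    · rw [h2, zero_mul]
    have hfwd : ∀ a ∈ w (σ i), ∀ b ∈ w (σ j), a * b = 0 := by
      intro a ha b hb
      obtain ⟨ca, rfl⟩ := hspan _ _ _ (hyw i) ha h1
      obtain ⟨cb, rfl⟩ := hspan _ _ _ (hyw j) hb h2
      rw [smul_mul_assoc, mul_smul_comm, hij, smul_zero, smul_zero]
    exact (hzz (σ i) (σ j)).mp hfwd (y i) (hyw i) (y j) (hyw j)
  -- commutation scalars
  have hcex : ∀ i j : Fin m, ∃ c : K, c ≠ 0 ∧ y i * y j = c • (y j * y i) := by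
    intro i j
    by_cases hij : y i * y j = 0
    · exact ⟨1, one_ne_zero, by rw [hij, hy0 i j hij, smul_zero]⟩
    · have hji : y j * y i ≠ 0 := fun h => hij (hy0 j i h)
      have h1 : y i * y j ∈ w (σ i + σ j) := hmul _ _ _ (hyw i) _ (hyw j)
      have h2 : y j * y i ∈ w (σ i + σ j) := by
        rw [add_comm]
        exact hmul _ _ _ (hyw j) _ (hyw i)
      obtain ⟨c, hc⟩ := hspan _ _ _ h2 h1 hji
      refine ⟨c, ?_, hc⟩
      rintro rfl
      rw [zero_smul] at hc
      exact hij hc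
  choose c0 hc0ne hc0eq using hcex
  set c : Fin m → Fin m → K :=
    fun i j => if i = j then 1 else if y i * y j = 0 then 1 else c0 i j with hc
  have hcne : ∀ i j, c i j ≠ 0 := by
    intro i j
    rw [hc]
    dsimp only
    split_ifs with h1 h2
    · exact one_ne_zero
    · exact one_ne_zero
    · exact hc0ne i j
  have hceq : ∀ i j, y i * y j = (c i j) • (y j * y i) := by
    intro i j
    rw [hc]
    dsimp only
    split_ifs with h1 h2
    · subst h1; rw [one_smul]
    · rw [h2, hy0 i j h2, smul_zero]
    · exact hc0eq i j
  have hcdiag : ∀ i, c i i = 1 := by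
    intro i
    rw [hc]
    simp
  have hone_of : ∀ (t : K) (v : R), v ≠ 0 → v = t • v → t = 1 := by
    intro t v hv0 hv
    have : (1 - t) • v = 0 := by
      rw [sub_smul, one_smul, ← hv, sub_self]
    rcases smul_eq_zero.mp this with h | h
    · exact (sub_eq_zero.mp h).symm
    · exact absurd h hv0
  have hcskew : ∀ i j, c j i = (c i j)⁻¹ := by
    intro i j
    by_cases h : i = j
    · subst h; rw [hcdiag, inv_one]
    by_cases hij : y i * y j = 0
    · have hji : y j * y i = 0 := hy0 i j hij
      have e1 : c i j = 1 := by rw [hc]; simp [h, hij]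
      have e2 : c j i = 1 := by rw [hc]; simp [Ne.symm h, hji]
      rw [e1, e2, inv_one]
    · have hji : y j * y i ≠ 0 := fun hz => hij (hy0 j i hz)
      have e1 := hceq i j
      have e2 := hceq j i
      rw [e2, smul_smul] at e1
      have hmul1 : c i j * c j i = 1 := hone_of _ _ hij e1
      exact eq_inv_of_mul_eq_one_right hmul1
  set q : Fin m → Fin m → Kˣ := fun i j => Units.mk0 (c i j) (hcne i j) with hq
  letI : NonUnitalNonAssocRing (TA K m q) := (TA.instRing q).toNonAssocRing.toNonUnitalNonAssocRing
  have hqval : ∀ i j, ((q i j : K)) = c i j := fun i j => rfl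
  have hqdiag : ∀ i, q i i = 1 := by
    intro i
    apply Units.ext
    rw [hqval, hcdiag]
    rfl
  have hqskew : ∀ i j, q j i = (q i j)⁻¹ := by
    intro i j
    apply Units.ext
    rw [hqval, hcskew, Units.val_inv_eq_inv_val, hqval]
  have hq' : ∀ i j, y i * y j = ((q i j : K)) • (y j * y i) := by
    intro i j
    rw [hqval]
    exact hceq i j
  -- the monomial map Y
  set Yf : (Fin m → ℕ) → R := fun α => Gm m y m α with hYf
  have hYmul : ∀ α β, Yf α * Yf β = (((dd q α β : Kˣ) : K)) • Yf (α + β) := by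
    intro α β
    show Gm m y m α * Gm m y m β = _
    rw [Gm_mul_Gm q y hq' α β m]
    congr 1
    rw [Finset.filter_true_of_mem (fun i (_ : i ∈ Finset.univ) => i.isLt), dd_coe]
  have hY0 : Yf 0 = 1 := Gm_zero y m
  have hYsingle : ∀ i, Yf (Pi.single i 1) = y i := by
    intro i
    show Gm m y m (Pi.single i 1) = y i
    rw [Gm_single y i m, if_pos i.isLt]
  -- the algebra morphism
  set ψ₀ : TA K m q →ₗ[K] R := Finsupp.linearCombination K Yf with hψ₀
  have hψ₀sing : ∀ α a, ψ₀ (TA.sing q α a) = a • Yf α := by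
    intro α a
    exact Finsupp.linearCombination_single K a α
  have hψ₀mul : ∀ f g : TA K m q, ψ₀ (f * g) = ψ₀ f * ψ₀ g := by
    intro f g
    induction f using TA.ind with
    | h0 => rw [TA.zero_mul', map_zero, zero_mul]
    | hadd f f' hf hf' => rw [add_mul, map_add, map_add, hf, hf', add_mul]
    | hs α a =>
      induction g using TA.ind with
      | h0 => rw [TA.mul_zero', map_zero, mul_zero]
      | hadd g g' hg hg' => rw [mul_add, map_add, map_add, hg, hg', mul_add]
      | hs β b =>
        rw [TA.single_mul_single, hψ₀sing, hψ₀sing, hψ₀sing, smul_mul_assoc,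
          mul_smul_comm, hYmul, smul_smul, smul_smul]
        congr 1
        ring
  set ψ : TA K m q →ₐ[K] R := AlgHom.ofLinearMap ψ₀
    (by
      show ψ₀ (TA.sing q 0 1) = 1
      rw [hψ₀sing, hY0, one_smul]) hψ₀mul with hψdef
  have hψval : ∀ a : TA K m q, ψ a = ψ₀ a := fun a => rfl
  have hsurj : Function.Surjective ψ := by
    have hr : ψ.range = ⊤ := by
      apply le_antisymm le_top
      rw [← hgen]
      apply Algebra.adjoin_le
      rintro r ⟨i, rfl⟩
      rw [SetLike.mem_coe, AlgHom.mem_range]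
      refine ⟨TA.sing q (Pi.single i 1) 1, ?_⟩
      rw [hψval, hψ₀sing, hYsingle, one_smul]
    intro r
    have hmem : r ∈ ψ.range := by rw [hr]; trivial
    exact hmem
  set Q := TA.quantumAffine q hqdiag hqskew with hQdef
  set V : Set (TA K m q) := {v | v ≠ 0 ∧
    (∃ (l mm : K) (α β : Fin m → ℕ), v = l • Q.x α + mm • Q.x β) ∧ ψ v = 0} with hV
  set B := TwoSidedIdeal.span V with hB
  refine ⟨m, TA K m q, inferInstance, inferInstance, Q, B,
    ⟨V, fun b hb => ⟨hb.1, hb.2.1⟩, rfl⟩, ψ, hsurj, ?_⟩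
  intro a
  constructor
  · -- ψ a = 0 → a ∈ B
    intro ha
    -- the grading degree of a monomial
    set g : (Fin m → ℕ) → S := fun α => ∑ i : Fin m, α i • σ i with hgdef
    have hYw : ∀ α, Yf α ∈ w (g α) := by
      intro α
      have h2 := Gm_mem_w y w σ hone hmul hyw α m
      rw [Finset.filter_true_of_mem (fun i (_ : i ∈ Finset.univ) => i.isLt)] at h2
      exact h2
    -- independence: homogeneous components of zero vanish
    have hker : ∀ (t : Finset S) (x : S → R), (∀ s ∈ t, x s ∈ w s) →
        ∑ s ∈ t, x s = 0 → ∀ s ∈ t, x s = 0 := by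
      intro t x hx hsum0 s hs
      have hd := iSupIndep_def.mp hindep s
      have h2 : x s ∈ ⨆ (t' : S) (_ : t' ≠ s), w t' := by
        have hxs : x s = - ∑ u ∈ t.erase s, x u := by
          have h3 := Finset.add_sum_erase t x hs
          rw [hsum0] at h3
          exact eq_neg_of_add_eq_zero_left h3
        rw [hxs]
        refine neg_mem (Submodule.sum_mem _ fun u hu => ?_)
        have hus : u ≠ s := Finset.ne_of_mem_erase hu
        exact le_iSup₂ (f := fun (j : S) (_ : j ≠ s) => w j) u hus
          (hx u (Finset.mem_of_mem_erase hu))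
      exact Submodule.disjoint_def.mp hd _ (hx s hs) h2
    -- key combinatorial step
    have hZ : ∀ (s : S) (t : Finset (Fin m → ℕ)) (cc : (Fin m → ℕ) → K),
        (∀ α ∈ t, Yf α ∈ w s) → (∑ α ∈ t, cc α • Yf α) = 0 →
        (∑ α ∈ t, cc α • TA.sing q α 1) ∈ Submodule.span K V := by
      intro s t cc hY h0
      by_cases hall : ∀ α ∈ t, Yf α = 0
      · refine Submodule.sum_mem _ fun α hα => ?_
        refine Submodule.smul_mem _ _ (Submodule.subset_span ?_)
        refine ⟨?_, ⟨1, 0, α, 0, by rw [one_smul, zero_smul, add_zero]; rfl⟩, ?_⟩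
        · intro hzz'
          have h' : (Finsupp.single α (1 : K)) = 0 := hzz'
          exact one_ne_zero (Finsupp.single_eq_zero.mp h')
        · rw [hψval, hψ₀sing, hall α hα, smul_zero]
      · push_neg at hall
        obtain ⟨α₀, hα₀t, hα₀⟩ := hall
        have hμ : ∀ α ∈ t, ∃ μ : K, Yf α = μ • Yf α₀ := fun α hα =>
          hspan s _ _ (hY α₀ hα₀t) (hY α hα) hα₀
        choose! μ hμeq using hμ
        have hμ0 : μ α₀ = 1 := (hone_of (μ α₀) (Yf α₀) hα₀ (hμeq α₀ hα₀t))
        have hsum : (∑ α ∈ t, cc α * μ α) = 0 := by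
          have hs2 : (∑ α ∈ t, cc α * μ α) • Yf α₀ = 0 := by
            rw [Finset.sum_smul, ← h0]
            refine Finset.sum_congr rfl fun α hα => ?_
            rw [mul_smul, ← hμeq α hα]
          rcases smul_eq_zero.mp hs2 with h | h
          · exact h
          · exact absurd h hα₀
        have hdecv : (∑ α ∈ t, cc α • TA.sing q α 1) =
            (∑ α ∈ t, cc α • (TA.sing q α 1 - (μ α) • TA.sing q α₀ 1)) +
            (∑ α ∈ t, cc α * μ α) • TA.sing q α₀ 1 := by
          rw [Finset.sum_smul, ← Finset.sum_add_distrib]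
          refine Finset.sum_congr rfl fun α hα => ?_
          rw [smul_sub, mul_smul, sub_add_cancel]
        rw [hdecv, hsum, zero_smul, add_zero]
        refine Submodule.sum_mem _ fun α hα => Submodule.smul_mem _ _ ?_
        by_cases hαα : α = α₀
        · subst hαα
          rw [hμ0, one_smul, sub_self]
          exact Submodule.zero_mem _
        · refine Submodule.subset_span ⟨?_, ⟨1, -(μ α), α, α₀, ?_⟩, ?_⟩
          · intro hcontra
            have h' : (Finsupp.single α (1 : K)) - μ α • Finsupp.single α₀ 1 = 0 := hcontra
            have h2 := DFunLike.congr_fun h' α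
            rw [Finsupp.sub_apply, Finsupp.smul_apply, Finsupp.single_eq_same,
              Finsupp.single_eq_of_ne hαα, smul_zero, sub_zero,
              Finsupp.coe_zero, Pi.zero_apply] at h2
            exact one_ne_zero h2
          · rw [one_smul, neg_smul, sub_eq_add_neg]
            rfl
          · rw [hψval, map_sub, map_smul, hψ₀sing, hψ₀sing, one_smul, one_smul,
              hμeq α hα, sub_self]
    -- decompose a into homogeneous fibers
    set a' : (Fin m → ℕ) →₀ K := a with ha'
    set T := a'.support.image g with hT
    set Ps : S → TA K m q :=
      fun s => ∑ α ∈ a'.support.filter (fun α => g α = s), a' α • TA.sing q α 1 with hPs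
    have hrepr : (∑ α ∈ a'.support, a' α • TA.sing q α 1) = a := by
      have h1 := Finsupp.sum_single a'
      rw [Finsupp.sum] at h1
      calc (∑ α ∈ a'.support, a' α • TA.sing q α 1)
          = ∑ α ∈ a'.support, Finsupp.single α (a' α) := by
            refine Finset.sum_congr rfl fun α _ => ?_
            show a' α • Finsupp.single α (1 : K) = Finsupp.single α (a' α)
            rw [Finsupp.smul_single', mul_one]
        _ = a := h1
    have hfib : ∑ s ∈ T, Ps s = a := by
      rw [← hrepr]
      exact Finset.sum_fiberwise_of_maps_to
        (fun α hα => Finset.mem_image_of_mem g hα) (fun α => a' α • TA.sing q α 1)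
    have hψPs : ∀ s, ψ (Ps s) = ∑ α ∈ a'.support.filter (fun α => g α = s), a' α • Yf α := by
      intro s
      rw [hPs]
      rw [map_sum]
      refine Finset.sum_congr rfl fun α _ => ?_
      rw [map_smul, hψval, hψ₀sing, one_smul]
    have hPsw : ∀ s, ψ (Ps s) ∈ w s := by
      intro s
      rw [hψPs]
      refine Submodule.sum_mem _ fun α hα => ?_
      have hgα : g α = s := (Finset.mem_filter.mp hα).2
      exact Submodule.smul_mem _ _ (hgα ▸ hYw α)
    have hPs0 : ∀ s ∈ T, ψ (Ps s) = 0 := by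
      refine hker T (fun s => ψ (Ps s)) (fun s _ => hPsw s) ?_
      rw [← map_sum, hfib, ha]
    have hspanV : a ∈ Submodule.span K V := by
      rw [← hfib]
      refine Submodule.sum_mem _ fun s hs => ?_
      rw [hPs]
      refine hZ s _ (fun α => a' α) (fun α hα => ?_) ?_
      · have hgα : g α = s := (Finset.mem_filter.mp hα).2
        exact hgα ▸ hYw α
      · rw [← hψPs s]
        exact hPs0 s hs
    -- conclude
    set BM : Submodule K (TA K m q) :=
      { carrier := {x | x ∈ B}
        add_mem' := fun hx hy => B.add_mem hx hy
        zero_mem' := B.zero_mem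
        smul_mem' := fun cc x hx => by
          show cc • x ∈ B
          rw [Algebra.smul_def]
          exact B.mul_mem_left _ _ hx } with hBM
    have hVB : V ⊆ (BM : Set (TA K m q)) := by
      intro v hv
      exact TwoSidedIdeal.subset_span hv
    exact Submodule.span_le.mpr hVB hspanV
  · -- a ∈ B → ψ a = 0
    intro ha
    set kerI : TwoSidedIdeal (TA K m q) := TwoSidedIdeal.mk' {x | ψ x = 0}
      (map_zero ψ)
      (fun {x y} hx hy => by
        show ψ (x + y) = 0
        rw [map_add, hx, hy, add_zero])
      (fun {x} hx => by
        show ψ (-x) = 0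
        rw [map_neg, hx, neg_zero])
      (fun {x y} hy => by
        show ψ (x * y) = 0
        rw [map_mul, hy, mul_zero])
      (fun {x y} hx => by
        show ψ (x * y) = 0
        rw [map_mul, hx, zero_mul]) with hkerI
    have h2 := TwoSidedIdeal.mem_span_iff.mp ha kerI ?_
    · exact (TwoSidedIdeal.mem_mk' _ _ _ _ _ _ a).mp h2
    · intro v hv
      rw [SetLike.mem_coe, TwoSidedIdeal.mem_mk']
      exact hv.2.2

theorem forward_dir {K : Type} [Field K] (R : Type) [Ring R] [Algebra K R]
    {m : ℕ} {A : Type} [Ring A] [Algebra K A] (Q : QuantumAffine K m A)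
    (B : TwoSidedIdeal A) (hbin : Q.IsBinomialIdeal B)
    (ψ : A →ₐ[K] R) (hsurj : Function.Surjective ψ) (hker : ∀ a : A, ψ a = 0 ↔ a ∈ B) :
    ∃ (S : Type) (_ : AddCommMonoid S) (w : S → Submodule K R),
        iSupIndep w ∧ (⨆ s, w s) = ⊤ ∧ (1 : R) ∈ w 0 ∧
        (∀ s t : S, ∀ a ∈ w s, ∀ b ∈ w t, a * b ∈ w (s + t)) ∧
        (∀ s : S, w s ≠ ⊥ → ∃ r : R, r ≠ 0 ∧ w s = Submodule.span K {r}) ∧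
        (∀ s t : S, (∀ a ∈ w s, ∀ b ∈ w t, a * b = 0) ↔
          (∀ a ∈ w s, ∀ b ∈ w t, b * a = 0)) := by
  classical
  obtain ⟨VS, hVSprop, hBspan⟩ := hbin
  -- basic closure properties of B
  have hsmulB : ∀ (cc : K) (b : A), b ∈ B → cc • b ∈ B := by
    intro cc b hb
    rw [Algebra.smul_def]
    exact B.mul_mem_left _ _ hb
  have hXadd : ∀ γ α, Q.x (γ + α) = (((Q.d γ α)⁻¹ : Kˣ) : K) • (Q.x γ * Q.x α) := by
    intro γ α
    rw [Q.x_mul, smul_smul, ← Units.val_mul, inv_mul_cancel, Units.val_one, one_smul]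
  have hXadd' : ∀ α γ, Q.x (α + γ) = (((Q.d α γ)⁻¹ : Kˣ) : K) • (Q.x α * Q.x γ) := by
    intro α γ
    rw [Q.x_mul, smul_smul, ← Units.val_mul, inv_mul_cancel, Units.val_one, one_smul]
  have hBmono : ∀ γ α, Q.x α ∈ B → Q.x (γ + α) ∈ B := by
    intro γ α h
    rw [hXadd]
    exact hsmulB _ _ (B.mul_mem_left _ _ h)
  have hBmono' : ∀ α γ, Q.x α ∈ B → Q.x (α + γ) ∈ B := by
    intro α γ h
    rw [hXadd']
    exact hsmulB _ _ (B.mul_mem_right _ _ h)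
  -- twisted binomial multiplication identities
  have hBbin : ∀ γ α β (lam : Kˣ), ∃ lam' : Kˣ,
      Q.x γ * (Q.x α - ((lam : K)) • Q.x β) =
        ((Q.d γ α : K)) • (Q.x (γ + α) - ((lam' : K)) • Q.x (γ + β)) := by
    intro γ α β lam
    refine ⟨lam * Q.d γ β * (Q.d γ α)⁻¹, ?_⟩
    rw [mul_sub, mul_smul_comm, Q.x_mul, Q.x_mul, smul_sub, smul_smul, smul_smul]
    congr 2
    all_goals simp only [Units.val_mul, Units.val_inv_eq_inv_val]
    all_goals try field_simp
    all_goals try ring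
  have hBbin' : ∀ α β γ (lam : Kˣ), ∃ lam' : Kˣ,
      (Q.x α - ((lam : K)) • Q.x β) * Q.x γ =
        ((Q.d α γ : K)) • (Q.x (α + γ) - ((lam' : K)) • Q.x (β + γ)) := by
    intro α β γ lam
    refine ⟨lam * Q.d β γ * (Q.d α γ)⁻¹, ?_⟩
    rw [sub_mul, smul_mul_assoc, Q.x_mul, Q.x_mul, smul_sub, smul_smul, smul_smul]
    congr 2
    all_goals simp only [Units.val_mul, Units.val_inv_eq_inv_val]
    all_goals try field_simp
    all_goals try ring
  -- rel is an additive congruence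
  have hrefl : ∀ α, Q.rel B α α := by
    intro α
    exact Or.inr ⟨1, by rw [Units.val_one, one_smul, sub_self]; exact B.zero_mem⟩
  have hsymm : ∀ {α β}, Q.rel B α β → Q.rel B β α := by
    rintro α β (⟨h1, h2⟩ | ⟨lam, h⟩)
    · exact Or.inl ⟨h2, h1⟩
    · refine Or.inr ⟨lam⁻¹, ?_⟩
      have heq : Q.x β - ((lam⁻¹ : Kˣ) : K) • Q.x α =
          -(((lam⁻¹ : Kˣ) : K) • (Q.x α - ((lam : K)) • Q.x β)) := by
        rw [smul_sub, neg_sub, smul_smul, ← Units.val_mul, inv_mul_cancel, Units.val_one,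
          one_smul]
      rw [heq]
      exact B.neg_mem (hsmulB _ _ h)
  have htrans : ∀ {α β γ}, Q.rel B α β → Q.rel B β γ → Q.rel B α γ := by
    rintro α β γ (⟨h1, h2⟩ | ⟨lam, h⟩) (⟨h3, h4⟩ | ⟨mu, h'⟩)
    · exact Or.inl ⟨h1, h4⟩
    · -- x β ∈ B and x β - mu x γ ∈ B ⇒ x γ ∈ B
      refine Or.inl ⟨h1, ?_⟩
      have h5 : ((mu : K)) • Q.x γ ∈ B := by
        have h6 := B.sub_mem h2 h'
        rw [sub_sub_cancel] at h6
        exact h6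
      have h7 := hsmulB ((mu⁻¹ : Kˣ) : K) _ h5
      rw [smul_smul, ← Units.val_mul, inv_mul_cancel, Units.val_one, one_smul] at h7
      exact h7
    · -- x α - lam x β ∈ B, x β ∈ B, x γ ∈ B ⇒ x α ∈ B
      refine Or.inl ⟨?_, h4⟩
      have h5 := B.add_mem h (hsmulB ((lam : K)) _ h3)
      rw [sub_add_cancel] at h5
      exact h5
    · refine Or.inr ⟨lam * mu, ?_⟩
      have heq : Q.x α - (((lam * mu : Kˣ) : K)) • Q.x γ =
          (Q.x α - ((lam : K)) • Q.x β) +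
            ((lam : K)) • (Q.x β - ((mu : K)) • Q.x γ) := by
        rw [smul_sub, Units.val_mul, smul_smul]
        abel
      rw [heq]
      exact B.add_mem h (hsmulB _ _ h')
  have haddl : ∀ γ {α β}, Q.rel B α β → Q.rel B (γ + α) (γ + β) := by
    rintro γ α β (⟨h1, h2⟩ | ⟨lam, h⟩)
    · exact Or.inl ⟨hBmono γ α h1, hBmono γ β h2⟩
    · obtain ⟨lam', heq⟩ := hBbin γ α β lam
      refine Or.inr ⟨lam', ?_⟩
      have h2 : ((Q.d γ α : K)) • (Q.x (γ + α) - ((lam' : K)) • Q.x (γ + β)) ∈ B := by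
        rw [← heq]
        exact B.mul_mem_left _ _ h
      have h3 := hsmulB (((Q.d γ α)⁻¹ : Kˣ) : K) _ h2
      rw [smul_smul, ← Units.val_mul, inv_mul_cancel, Units.val_one, one_smul] at h3
      exact h3
  set con : AddCon (Fin m → ℕ) :=
    { r := Q.rel B
      iseqv := ⟨hrefl, hsymm, htrans⟩
      add' := by
        intro a b cc dd h1 h2
        have h3 : Q.rel B (a + cc) (b + cc) := by
          have := haddl cc h1
          rwa [add_comm cc a, add_comm cc b] at this
        have h4 : Q.rel B (b + cc) (b + dd) := haddl b h2
        exact htrans h3 h4 } with hcon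
  have hconr : ∀ {a b}, con a b ↔ Q.rel B a b := Iff.rfl
  set S := con.Quotient with hS
  set w : S → Submodule K R :=
    fun s => Submodule.span K {ψ (Q.x (Quotient.out s))} with hw
  -- ψ images of related monomials are proportional
  have hrel2 : ∀ α β, con α β → ∃ cc : K, ψ (Q.x α) = cc • ψ (Q.x β) := by
    rintro α β (⟨h1, h2⟩ | ⟨lam, h⟩)
    · exact ⟨0, by rw [(hker _).mpr h1, zero_smul]⟩
    · refine ⟨(lam : K), ?_⟩
      have h2 := (hker _).mpr h
      rw [map_sub, map_smul, sub_eq_zero] at h2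
      exact h2
  have hout : ∀ s : S, ((Quotient.out s : Fin m → ℕ) : S) = s := fun s => Quotient.out_eq s
  have hconrep : ∀ α : Fin m → ℕ, con α (Quotient.out ((α : S))) := by
    intro α
    exact con.eq.mp (hout _).symm
  have hconadd : ∀ s t : S, con (Quotient.out s + Quotient.out t) (Quotient.out (s + t)) := by
    intro s t
    apply con.eq.mp
    rw [show ((Quotient.out s + Quotient.out t : Fin m → ℕ) : S) =
      ((Quotient.out s : Fin m → ℕ) : S) + ((Quotient.out t : Fin m → ℕ) : S) from rfl]
    rw [hout, hout, hout]
  have hpsi_mul : ∀ α β, ψ (Q.x α) * ψ (Q.x β) = ((Q.d α β : K)) • ψ (Q.x (α + β)) := by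
    intro α β
    rw [← map_mul, Q.x_mul, map_smul]
  have hvw : ∀ α : Fin m → ℕ, ψ (Q.x α) ∈ w ((α : S)) := by
    intro α
    obtain ⟨cc, hcc⟩ := hrel2 _ _ (hconrep α)
    rw [hcc]
    exact Submodule.smul_mem _ _ (Submodule.mem_span_singleton_self _)
  have hone_of : ∀ (t : K) (vv : R), vv ≠ 0 → vv = t • vv → t = 1 := by
    intro t vv hv0 hveq
    have h1 : (1 - t) • vv = 0 := by
      rw [sub_smul, one_smul, ← hveq, sub_self]
    rcases smul_eq_zero.mp h1 with h | h
    · exact (sub_eq_zero.mp h).symm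
    · exact absurd h hv0
  -- span of nice binomials contains B
  set VN : Set A := {u | (∃ α, u = Q.x α ∧ Q.x α ∈ B) ∨
    (∃ (α β : Fin m → ℕ) (lam : Kˣ), u = Q.x α - ((lam : K)) • Q.x β ∧ u ∈ B)} with hVN
  have hXmulVN : ∀ γ, ∀ u ∈ VN, Q.x γ * u ∈ Submodule.span K VN := by
    rintro γ u (⟨α, rfl, hB⟩ | ⟨α, β, lam, rfl, hB⟩)
    · rw [Q.x_mul]
      exact Submodule.smul_mem _ _
        (Submodule.subset_span (Or.inl ⟨γ + α, rfl, hBmono γ α hB⟩))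
    · obtain ⟨lam', heq⟩ := hBbin γ α β lam
      rw [heq]
      refine Submodule.smul_mem _ _ (Submodule.subset_span (Or.inr ⟨γ + α, γ + β, lam', rfl, ?_⟩))
      have h2 : ((Q.d γ α : K)) • (Q.x (γ + α) - ((lam' : K)) • Q.x (γ + β)) ∈ B := by
        rw [← heq]
        exact B.mul_mem_left _ _ hB
      have h3 := hsmulB (((Q.d γ α)⁻¹ : Kˣ) : K) _ h2
      rw [smul_smul, ← Units.val_mul, inv_mul_cancel, Units.val_one, one_smul] at h3
      exact h3
  have hVNmulX : ∀ γ, ∀ u ∈ VN, u * Q.x γ ∈ Submodule.span K VN := by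
    rintro γ u (⟨α, rfl, hB⟩ | ⟨α, β, lam, rfl, hB⟩)
    · rw [Q.x_mul]
      exact Submodule.smul_mem _ _
        (Submodule.subset_span (Or.inl ⟨α + γ, rfl, hBmono' α γ hB⟩))
    · obtain ⟨lam', heq⟩ := hBbin' α β γ lam
      rw [heq]
      refine Submodule.smul_mem _ _ (Submodule.subset_span (Or.inr ⟨α + γ, β + γ, lam', rfl, ?_⟩))
      have h2 : ((Q.d α γ : K)) • (Q.x (α + γ) - ((lam' : K)) • Q.x (β + γ)) ∈ B := by
        rw [← heq]
        exact B.mul_mem_right _ _ hB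
      have h3 := hsmulB (((Q.d α γ)⁻¹ : Kˣ) : K) _ h2
      rw [smul_smul, ← Units.val_mul, inv_mul_cancel, Units.val_one, one_smul] at h3
      exact h3
  have hmulVN : ∀ (x u : A), u ∈ Submodule.span K VN → x * u ∈ Submodule.span K VN := by
    have hXstep : ∀ (u : A), u ∈ VN → ∀ x : A, x * u ∈ Submodule.span K VN := by
      intro u hu
      set M : Submodule K A :=
        { carrier := {x | x * u ∈ Submodule.span K VN}
          add_mem' := fun {x y} hx hy => by
            show (x + y) * u ∈ Submodule.span K VN
            rw [add_mul]
            exact Submodule.add_mem _ hx hy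
          zero_mem' := by
            show (0 : A) * u ∈ Submodule.span K VN
            rw [zero_mul]
            exact Submodule.zero_mem _
          smul_mem' := fun cc x hx => by
            show (cc • x) * u ∈ Submodule.span K VN
            rw [smul_mul_assoc]
            exact Submodule.smul_mem _ _ hx } with hM
      intro x
      have hx : x ∈ M := by
        have h2 : Submodule.span K (Set.range ⇑Q.basis) ≤ M := by
          rw [Submodule.span_le]
          rintro _ ⟨α, rfl⟩
          show Q.basis α * u ∈ Submodule.span K VN
          rw [Q.basis_eq]
          exact hXmulVN α u hu
        exact h2 (by rw [Q.basis.span_eq]; trivial)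
      exact hx
    intro x u hu
    set M' : Submodule K A :=
      { carrier := {u | x * u ∈ Submodule.span K VN}
        add_mem' := fun {u1 u2} h1 h2 => by
          show x * (u1 + u2) ∈ Submodule.span K VN
          rw [mul_add]
          exact Submodule.add_mem _ h1 h2
        zero_mem' := by
          show x * (0 : A) ∈ Submodule.span K VN
          rw [mul_zero]
          exact Submodule.zero_mem _
        smul_mem' := fun cc u1 h1 => by
          show x * (cc • u1) ∈ Submodule.span K VN
          rw [mul_smul_comm]
          exact Submodule.smul_mem _ _ h1 } with hM'
    have h3 : Submodule.span K VN ≤ M' := by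
      rw [Submodule.span_le]
      intro u1 hu1
      exact hXstep u1 hu1 x
    exact h3 hu
  have hVNmul : ∀ (x u : A), u ∈ Submodule.span K VN → u * x ∈ Submodule.span K VN := by
    have hXstep : ∀ (u : A), u ∈ VN → ∀ x : A, u * x ∈ Submodule.span K VN := by
      intro u hu
      set M : Submodule K A :=
        { carrier := {x | u * x ∈ Submodule.span K VN}
          add_mem' := fun {x y} hx hy => by
            show u * (x + y) ∈ Submodule.span K VN
            rw [mul_add]
            exact Submodule.add_mem _ hx hy
          zero_mem' := by
            show u * (0 : A) ∈ Submodule.span K VN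
            rw [mul_zero]
            exact Submodule.zero_mem _
          smul_mem' := fun cc x hx => by
            show u * (cc • x) ∈ Submodule.span K VN
            rw [mul_smul_comm]
            exact Submodule.smul_mem _ _ hx } with hM
      intro x
      have hx : x ∈ M := by
        have h2 : Submodule.span K (Set.range ⇑Q.basis) ≤ M := by
          rw [Submodule.span_le]
          rintro _ ⟨α, rfl⟩
          show u * Q.basis α ∈ Submodule.span K VN
          rw [Q.basis_eq]
          exact hVNmulX α u hu
        exact h2 (by rw [Q.basis.span_eq]; trivial)
      exact hx
    intro x u hu
    set M' : Submodule K A :=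
      { carrier := {u | u * x ∈ Submodule.span K VN}
        add_mem' := fun {u1 u2} h1 h2 => by
          show (u1 + u2) * x ∈ Submodule.span K VN
          rw [add_mul]
          exact Submodule.add_mem _ h1 h2
        zero_mem' := by
          show (0 : A) * x ∈ Submodule.span K VN
          rw [zero_mul]
          exact Submodule.zero_mem _
        smul_mem' := fun cc u1 h1 => by
          show (cc • u1) * x ∈ Submodule.span K VN
          rw [smul_mul_assoc]
          exact Submodule.smul_mem _ _ h1 } with hM'
    have h3 : Submodule.span K VN ≤ M' := by
      rw [Submodule.span_le]
      intro u1 hu1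
      exact hXstep u1 hu1 x
    exact h3 hu
  set I₀ : TwoSidedIdeal A := TwoSidedIdeal.mk' {a | a ∈ Submodule.span K VN}
    (show (0 : A) ∈ Submodule.span K VN from Submodule.zero_mem _)
    (fun {x y} hx hy => show x + y ∈ Submodule.span K VN from Submodule.add_mem _ hx hy)
    (fun {x} hx => show -x ∈ Submodule.span K VN from Submodule.neg_mem _ hx)
    (fun {x y} hy => hmulVN x y hy)
    (fun {x y} hx => hVNmul y x hx) with hI₀
  have hVSsub : VS ⊆ (I₀ : Set A) := by
    intro b hb
    obtain ⟨hb0, l, mm, α, β, hbeq⟩ := hVSprop b hb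
    have hbB : b ∈ B := by
      rw [hBspan]
      exact TwoSidedIdeal.subset_span hb
    rw [SetLike.mem_coe, TwoSidedIdeal.mem_mk']
    show b ∈ Submodule.span K VN
    by_cases hl : l = 0
    · by_cases hm : mm = 0
      · exfalso
        apply hb0
        rw [hbeq, hl, hm, zero_smul, zero_smul, add_zero]
      · -- b = mm • x β
        have hxβ : Q.x β ∈ B := by
          have h2 := hsmulB mm⁻¹ _ hbB
          rw [hbeq, hl, zero_smul, zero_add, smul_smul, inv_mul_cancel₀ hm, one_smul] at h2
          exact h2
        rw [hbeq, hl, zero_smul, zero_add]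
        exact Submodule.smul_mem _ _ (Submodule.subset_span (Or.inl ⟨β, rfl, hxβ⟩))
    · by_cases hm : mm = 0
      · have hxα : Q.x α ∈ B := by
          have h2 := hsmulB l⁻¹ _ hbB
          rw [hbeq, hm, zero_smul, add_zero, smul_smul, inv_mul_cancel₀ hl, one_smul] at h2
          exact h2
        rw [hbeq, hm, zero_smul, add_zero]
        exact Submodule.smul_mem _ _ (Submodule.subset_span (Or.inl ⟨α, rfl, hxα⟩))
      · by_cases hab : α = β
        · -- b = (l + mm) • x α
          have hbeq2 : b = (l + mm) • Q.x α := by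
            rw [hbeq, hab, ← add_smul]
          have hlm : l + mm ≠ 0 := by
            intro h2
            apply hb0
            rw [hbeq2, h2, zero_smul]
          have hxα : Q.x α ∈ B := by
            have h2 := hsmulB (l + mm)⁻¹ _ hbB
            rw [hbeq2, smul_smul, inv_mul_cancel₀ hlm, one_smul] at h2
            exact h2
          rw [hbeq2]
          exact Submodule.smul_mem _ _ (Submodule.subset_span (Or.inl ⟨α, rfl, hxα⟩))
        · -- genuine binomial
          set lam : Kˣ := Units.mk0 (-(mm / l)) (by
            intro h2
            rw [neg_eq_zero, div_eq_zero_iff] at h2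
            rcases h2 with h2 | h2
            · exact hm h2
            · exact hl h2) with hlam
          have hweq : Q.x α - ((lam : K)) • Q.x β = l⁻¹ • b := by
            rw [hbeq, smul_add, smul_smul, smul_smul, inv_mul_cancel₀ hl, one_smul]
            show Q.x α - (-(mm / l)) • Q.x β = Q.x α + (l⁻¹ * mm) • Q.x β
            rw [neg_smul, sub_neg_eq_add]
            congr 2
            rw [div_eq_inv_mul]
          have hwB : Q.x α - ((lam : K)) • Q.x β ∈ B := by
            rw [hweq]
            exact hsmulB _ _ hbB
          have hbw : b = l • (Q.x α - ((lam : K)) • Q.x β) := by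
            rw [hweq, smul_smul, mul_inv_cancel₀ hl, one_smul]
          rw [hbw]
          exact Submodule.smul_mem _ _
            (Submodule.subset_span (Or.inr ⟨α, β, lam, rfl, hwB⟩))
  have hBsubspan : ∀ a : A, a ∈ B → a ∈ Submodule.span K VN := by
    intro a ha
    rw [hBspan] at ha
    have h2 := TwoSidedIdeal.mem_span_iff.mp ha I₀ hVSsub
    rw [TwoSidedIdeal.mem_mk'] at h2
    exact h2
  -- the six grading properties
  have hdimw : ∀ s : S, w s ≠ ⊥ → ∃ r : R, r ≠ 0 ∧ w s = Submodule.span K {r} := by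
    intro s hs
    refine ⟨ψ (Q.x (Quotient.out s)), ?_, rfl⟩
    intro h0
    apply hs
    show Submodule.span K {ψ (Q.x (Quotient.out s))} = ⊥
    rw [h0, Submodule.span_zero_singleton]
  have honew : (1 : R) ∈ w 0 := by
    obtain ⟨cc, hcc⟩ := hrel2 0 (Quotient.out (0 : S)) (con.eq.mp (by rw [hout]; exact rfl))
    have h1 : ψ (Q.x 0) = 1 := by rw [Q.x_zero, map_one]
    rw [h1] at hcc
    rw [hcc]
    exact Submodule.smul_mem _ _ (Submodule.mem_span_singleton_self _)
  have hmulw : ∀ s t : S, ∀ a ∈ w s, ∀ b ∈ w t, a * b ∈ w (s + t) := by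
    intro s t a ha b hb
    obtain ⟨ca, hca⟩ := Submodule.mem_span_singleton.mp ha
    obtain ⟨cb, hcb⟩ := Submodule.mem_span_singleton.mp hb
    obtain ⟨cc, hcc⟩ := hrel2 _ _ (hconadd s t)
    have h1 : a * b = (ca * cb) •
        (ψ (Q.x (Quotient.out s)) * ψ (Q.x (Quotient.out t))) := by
      rw [← hca, ← hcb, smul_mul_assoc, mul_smul_comm, smul_smul]
    rw [h1, hpsi_mul, hcc, smul_smul, smul_smul]
    exact Submodule.smul_mem _ _ (Submodule.mem_span_singleton_self _)
  have htop : (⨆ s, w s) = ⊤ := by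
    apply le_antisymm le_top
    have h3 : Submodule.map ψ.toLinearMap ⊤ = ⊤ := by
      rw [Submodule.map_top, LinearMap.range_eq_top]
      exact hsurj
    have h4 : (⊤ : Submodule K R) ≤ ⨆ s, w s := by
      calc (⊤ : Submodule K R) = Submodule.map ψ.toLinearMap ⊤ := h3.symm
        _ = Submodule.map ψ.toLinearMap (Submodule.span K (Set.range ⇑Q.basis)) := by
            rw [Q.basis.span_eq]
        _ = Submodule.span K (⇑ψ.toLinearMap '' Set.range ⇑Q.basis) :=
            Submodule.map_span _ _
        _ ≤ ⨆ s, w s := by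
            rw [Submodule.span_le]
            rintro _ ⟨_, ⟨α, rfl⟩, rfl⟩
            show ψ (Q.basis α) ∈ (⨆ s, w s : Submodule K R)
            rw [Q.basis_eq]
            exact le_iSup w ((α : S)) (hvw α)
    exact h4
  have hDsmul0 : ∀ (u : Kˣ) (r : R), ((u : K)) • r = 0 ↔ r = 0 := by
    intro u r
    constructor
    · intro h
      rcases smul_eq_zero.mp h with h | h
      · exact absurd h (Units.ne_zero u)
      · exact h
    · intro h
      rw [h, smul_zero]
  have hzzw : ∀ s t : S, (∀ a ∈ w s, ∀ b ∈ w t, a * b = 0) ↔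
      (∀ a ∈ w s, ∀ b ∈ w t, b * a = 0) := by
    intro s t
    have hself : ∀ u : S, ψ (Q.x (Quotient.out u)) ∈ w u :=
      fun u => Submodule.mem_span_singleton_self _
    have hvv : ψ (Q.x (Quotient.out s)) * ψ (Q.x (Quotient.out t)) = 0 ↔
        ψ (Q.x (Quotient.out t)) * ψ (Q.x (Quotient.out s)) = 0 := by
      rw [hpsi_mul, hpsi_mul, hDsmul0, hDsmul0, add_comm (Quotient.out t)]
    constructor
    · intro h a ha b hb
      obtain ⟨ca, hca⟩ := Submodule.mem_span_singleton.mp ha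
      obtain ⟨cb, hcb⟩ := Submodule.mem_span_singleton.mp hb
      have h1 := h _ (hself s) _ (hself t)
      have h2 := hvv.mp h1
      rw [← hca, ← hcb, smul_mul_assoc, mul_smul_comm, h2, smul_zero, smul_zero]
    · intro h a ha b hb
      obtain ⟨ca, hca⟩ := Submodule.mem_span_singleton.mp ha
      obtain ⟨cb, hcb⟩ := Submodule.mem_span_singleton.mp hb
      have h1 := h _ (hself s) _ (hself t)
      have h2 := hvv.mpr h1
      rw [← hca, ← hcb, smul_mul_assoc, mul_smul_comm, h2, smul_zero, smul_zero]
  have hindep : iSupIndep w := by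
    rw [iSupIndep_def]
    intro s
    by_cases hvs : ψ (Q.x (Quotient.out s)) = 0
    · have hbot : w s = ⊥ := by
        show Submodule.span K {ψ (Q.x (Quotient.out s))} = ⊥
        rw [hvs, Submodule.span_zero_singleton]
      rw [hbot]
      exact disjoint_bot_left
    · set μs : (Fin m → ℕ) → K := fun β =>
        if h : ((β : S) = s) then
          Classical.choose (hrel2 β (Quotient.out s) (con.eq.mp (by rw [hout]; exact h)))
        else 0 with hμs
      have hμspec : ∀ β : Fin m → ℕ, ∀ _ : ((β : S) = s),
          ψ (Q.x β) = μs β • ψ (Q.x (Quotient.out s)) := by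
        intro β h
        rw [hμs]
        dsimp only
        rw [dif_pos h]
        exact Classical.choose_spec (hrel2 β (Quotient.out s) (con.eq.mp (by rw [hout]; exact h)))
      have hμzero : ∀ β : Fin m → ℕ, ((β : S) ≠ s) → μs β = 0 := by
        intro β h
        rw [hμs]
        dsimp only
        rw [dif_neg h]
      have hμone : μs (Quotient.out s) = 1 := by
        have h := hμspec (Quotient.out s) (hout s)
        exact hone_of _ _ hvs h
      set T : A →ₗ[K] K := (Finsupp.linearCombination K μs).comp
        (Q.basis.repr : A ≃ₗ[K] ((Fin m → ℕ) →₀ K)).toLinearMap with hT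
      have hTX : ∀ β : Fin m → ℕ, T (Q.x β) = μs β := by
        intro β
        show (Finsupp.linearCombination K μs) (Q.basis.repr (Q.x β)) = μs β
        rw [← Q.basis_eq, Module.Basis.repr_self, Finsupp.linearCombination_single, one_smul]
      have hXnotB : ∀ β : Fin m → ℕ, ((β : S) = s) → Q.x β ∉ B := by
        intro β h hB
        have hcon : con β (Quotient.out s) := con.eq.mp (by rw [hout]; exact h)
        rcases (hconr.mp hcon) with ⟨h1, h2⟩ | ⟨lam, hl⟩
        · exact hvs ((hker _).mpr h2)
        · have h3 := (hker _).mpr hl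
          rw [map_sub, map_smul, (hker _).mpr hB, zero_sub, neg_eq_zero] at h3
          rcases smul_eq_zero.mp h3 with h4 | h4
          · exact Units.ne_zero lam h4
          · exact hvs h4
      have hTVN : ∀ u ∈ VN, T u = 0 := by
        rintro u (⟨α, rfl, hB⟩ | ⟨α, β, lam, rfl, hB⟩)
        · by_cases h : (α : S) = s
          · exact absurd hB (hXnotB α h)
          · rw [hTX, hμzero α h]
        · have hαβ : ((α : S)) = ((β : S)) := con.eq.mpr (hconr.mpr (Or.inr ⟨lam, hB⟩))
          rw [map_sub, map_smul, hTX, hTX, smul_eq_mul]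
          by_cases h : (α : S) = s
          · have hβ : (β : S) = s := hαβ.symm.trans h
            have e1 := hμspec α h
            have e2 := hμspec β hβ
            have hψ0 := (hker _).mpr hB
            rw [map_sub, map_smul, e1, e2, smul_smul, ← sub_smul] at hψ0
            rcases smul_eq_zero.mp hψ0 with h4 | h4
            · exact h4
            · exact absurd h4 hvs
          · have hβ : (β : S) ≠ s := fun hh => h (hαβ.trans hh)
            rw [hμzero α h, hμzero β hβ, mul_zero, sub_zero]
      have hTB : ∀ a : A, a ∈ B → T a = 0 := by
        intro a ha
        have h2 := hBsubspan a ha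
        have h3 : Submodule.span K VN ≤ LinearMap.ker T := by
          rw [Submodule.span_le]
          intro u hu
          rw [SetLike.mem_coe, LinearMap.mem_ker]
          exact hTVN u hu
        exact LinearMap.mem_ker.mp (h3 h2)
      rw [Submodule.disjoint_def]
      intro r hr hr2
      obtain ⟨cr, hcr⟩ := Submodule.mem_span_singleton.mp hr
      have hsub : (⨆ (t : S) (_ : t ≠ s), w t) ≤
          Submodule.span K ((fun t => ψ (Q.x (Quotient.out t))) '' {t | t ≠ s}) := by
        refine iSup₂_le fun t ht => ?_
        show Submodule.span K {ψ (Q.x (Quotient.out t))} ≤ _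
        refine Submodule.span_mono ?_
        intro x hx
        rw [Set.mem_singleton_iff] at hx
        exact ⟨t, ht, hx.symm⟩
      have hr3 := hsub hr2
      rw [Submodule.mem_span_set] at hr3
      obtain ⟨cf, hcfsupp, hcfsum⟩ := hr3
      have hch : ∀ u ∈ cf.support, ∃ t : S, t ≠ s ∧ ψ (Q.x (Quotient.out t)) = u := by
        intro u hu
        obtain ⟨t, ht, hvt⟩ := hcfsupp hu
        exact ⟨t, ht, hvt⟩
      choose! tf htf1 htf2 using hch
      set aA : A := cr • Q.x (Quotient.out s) -
        ∑ u ∈ cf.support, cf u • Q.x (Quotient.out (tf u)) with haA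
      have hψaA : ψ aA = 0 := by
        rw [haA, map_sub, map_smul, map_sum]
        have h4 : ∑ u ∈ cf.support, ψ (cf u • Q.x (Quotient.out (tf u)))
            = ∑ u ∈ cf.support, cf u • u := by
          refine Finset.sum_congr rfl fun u hu => ?_
          rw [map_smul, htf2 u hu]
        rw [h4]
        have h5 : ∑ u ∈ cf.support, cf u • u = r := by rw [← hcfsum]; rfl
        rw [h5, hcr, sub_self]
      have hT0 := hTB aA ((hker _).mp hψaA)
      rw [haA, map_sub, map_smul, map_sum] at hT0
      have h6 : ∑ u ∈ cf.support, T (cf u • Q.x (Quotient.out (tf u))) = 0 := by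
        refine Finset.sum_eq_zero fun u hu => ?_
        rw [map_smul, hTX, hμzero _ (by rw [hout]; exact htf1 u hu), smul_zero]
      rw [h6, sub_zero, hTX, hμone, smul_eq_mul, mul_one] at hT0
      rw [← hcr, hT0, zero_smul]
  exact ⟨S, inferInstance, w, hindep, htop, honew, hmulw, hdimw, hzzw⟩

/-- A unital affine `K`-algebra is a binomial algebra (a quotient of a quantum
affine space by a binomial ideal) iff it admits a grading by a commutative
monoid whose nonzero homogeneous components are 1-dimensional and such that
`R_s R_t = 0 ↔ R_t R_s = 0`. -/
theorem binomial_algebra_iff_graded {K : Type} [Field K]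
    (R : Type) [Ring R] [Algebra K R] [Algebra.FiniteType K R] :
    (∃ (m : ℕ) (A : Type) (_ : Ring A) (_ : Algebra K A)
        (Q : QuantumAffine K m A) (B : TwoSidedIdeal A),
        Q.IsBinomialIdeal B ∧
        ∃ ψ : A →ₐ[K] R, Function.Surjective ψ ∧ ∀ a : A, ψ a = 0 ↔ a ∈ B) ↔
    (∃ (S : Type) (_ : AddCommMonoid S) (w : S → Submodule K R),
        iSupIndep w ∧ (⨆ s, w s) = ⊤ ∧ (1 : R) ∈ w 0 ∧
        (∀ s t : S, ∀ a ∈ w s, ∀ b ∈ w t, a * b ∈ w (s + t)) ∧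
        (∀ s : S, w s ≠ ⊥ → ∃ r : R, r ≠ 0 ∧ w s = Submodule.span K {r}) ∧
        (∀ s t : S, (∀ a ∈ w s, ∀ b ∈ w t, a * b = 0) ↔
          (∀ a ∈ w s, ∀ b ∈ w t, b * a = 0))) := by
  constructor
  · rintro ⟨m, A, instRA, instAA, Q, B, hbin, ψ, hsurj, hker⟩
    exact forward_dir R Q B hbin ψ hsurj hker
  · rintro ⟨S, instS, w, hindep, hsup, hone, hmul, hdim, hzz⟩
    exact backward_dir R S instS w hindep hsup hone hmul hdim hzz
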